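/- Let f₀ : ℝ → ℝ be a bounded continuous function and define the smeared eigenfunction F(ρ,η) = (ρ^{3/2}/2) ∫_ℝ f₀(y)·(ρ² + (η−y)²)^{−3/2} dy on the upper half-plane H. Then for every fixed η ∈ ℝ, √ρ·F(ρ,η) → f₀(η) as ρ → 0⁺; that is, F has boundary value f₀. -/

import Mathlib

open MeasureTheory Filter

/-- The smeared eigenfunction with boundary data f₀. -/
noncomputable def smearedF (f₀ : ℝ → ℝ) (ρ η : ℝ) : ℝ :=
  ρ ^ ((3 : ℝ) / 2) / 2 * ∫ y : ℝ, f₀ y * (ρ ^ 2 + (η - y) ^ 2) ^ (-(3 : ℝ) / 2)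

lemma poisson_integrable :
    Integrable (fun x : ℝ => ((1 : ℝ) + x ^ 2) ^ (-(3 : ℝ) / 2)) := by
  have h := integrable_rpow_neg_one_add_norm_sq (E := ℝ) (μ := volume) (r := 3)
    (by norm_num [Module.finrank_self])
  simpa [Real.norm_eq_abs, sq_abs] using h

lemma poisson_hasDerivAt (x : ℝ) :
    HasDerivAt (fun x : ℝ => x * ((1 : ℝ) + x ^ 2) ^ (-(1 : ℝ) / 2))
      (((1 : ℝ) + x ^ 2) ^ (-(3 : ℝ) / 2)) x := by
  have hu : (0 : ℝ) < 1 + x ^ 2 := by positivity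
  have h1 : HasDerivAt (fun x : ℝ => (1 : ℝ) + x ^ 2) (2 * x) x := by
    simpa using (hasDerivAt_pow 2 x).const_add 1
  have h2 : HasDerivAt (fun x : ℝ => ((1 : ℝ) + x ^ 2) ^ (-(1 : ℝ) / 2))
      (2 * x * (-(1 : ℝ) / 2) * ((1 : ℝ) + x ^ 2) ^ (-(1 : ℝ) / 2 - 1)) x :=
    h1.rpow_const (Or.inl hu.ne')
  have h3 : HasDerivAt (fun y : ℝ => y * ((1 : ℝ) + y ^ 2) ^ (-(1 : ℝ) / 2))
      (1 * ((1 : ℝ) + x ^ 2) ^ (-(1 : ℝ) / 2) + id x * (2 * x * (-(1 : ℝ) / 2) * ((1 : ℝ) + x ^ 2) ^ (-(1 : ℝ) / 2 - 1))) x :=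
    (hasDerivAt_id x).mul h2
  convert h3 using 1
  have e1 : (-(1 : ℝ) / 2 - 1) = -(3 : ℝ) / 2 := by norm_num
  rw [e1]
  have key : ((1 : ℝ) + x ^ 2) ^ (-(1 : ℝ) / 2)
      = (1 + x ^ 2) * ((1 : ℝ) + x ^ 2) ^ (-(3 : ℝ) / 2) := by
    have h := (Real.rpow_add hu 1 (-(3 : ℝ) / 2)).symm
    rw [Real.rpow_one] at h
    rw [h]
    norm_num
  rw [key]
  simp only [id_eq]
  ring

lemma poisson_integral : ∫ x : ℝ, ((1 : ℝ) + x ^ 2) ^ (-(3 : ℝ) / 2) = 2 := by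
  set φ : ℝ → ℝ := fun x => x * ((1 : ℝ) + x ^ 2) ^ (-(1 : ℝ) / 2) with hφ
  have htop : Tendsto φ atTop (nhds 1) := by
    have h0 : Tendsto (fun x : ℝ => x⁻¹ ^ 2 + 1) atTop (nhds 1) := by
      have := (tendsto_inv_atTop_zero (𝕜 := ℝ)).pow 2
      have := this.add_const 1
      simpa using this
    have hcont : ContinuousAt (fun u : ℝ => u ^ (-(1 : ℝ) / 2)) 1 :=
      Real.continuousAt_rpow_const 1 _ (Or.inl one_ne_zero)
    have h1 : Tendsto (fun x : ℝ => (x⁻¹ ^ 2 + 1) ^ (-(1 : ℝ) / 2)) atTop (nhds 1) := by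
      have := hcont.tendsto.comp h0
      simpa [Function.comp_def] using this
    refine h1.congr' ?_
    filter_upwards [eventually_gt_atTop (0 : ℝ)] with x hx
    have hx2 : (0 : ℝ) < x ^ 2 := by positivity
    have e : (x⁻¹ ^ 2 + 1 : ℝ) = (1 + x ^ 2) / x ^ 2 := by
      field_simp
    rw [e, Real.div_rpow (by positivity) hx2.le]
    have e2 : ((x : ℝ) ^ 2) ^ (-(1 : ℝ) / 2) = x⁻¹ := by
      rw [← Real.rpow_natCast x 2, ← Real.rpow_mul hx.le]
      norm_num
      rw [Real.rpow_neg_one]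
    rw [e2]
    simp [hφ, div_eq_mul_inv, inv_inv, mul_comm]
  have hodd : ∀ x : ℝ, φ (-x) = -φ x := by
    intro x
    simp [hφ, neg_sq, neg_mul]
  have hbot : Tendsto φ atBot (nhds (-1)) := by
    have h := (htop.comp tendsto_neg_atBot_atTop).neg
    refine h.congr fun x => ?_
    simp [Function.comp, hodd]
  have := integral_of_hasDerivAt_of_tendsto (f := φ)
    (f' := fun x => ((1 : ℝ) + x ^ 2) ^ (-(3 : ℝ) / 2))
    (fun x => poisson_hasDerivAt x) poisson_integrable hbot htop
  rw [this]; norm_num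

/-- Poisson formula: the smeared eigenfunction F with boundary data f₀ satisfies
√ρ·F(ρ,η) → f₀(η) as ρ → 0⁺, for every fixed η. -/
theorem smeared_boundary_value (f₀ : ℝ → ℝ) (hc : Continuous f₀)
    (hb : ∃ C : ℝ, ∀ y : ℝ, |f₀ y| ≤ C) :
    ∀ η : ℝ,
      Tendsto (fun ρ : ℝ => Real.sqrt ρ * smearedF f₀ ρ η)
        (nhdsWithin 0 (Set.Ioi 0)) (nhds (f₀ η)) := by
  intro η
  obtain ⟨C, hC⟩ := hb
  -- the rescaled integral
  set J : ℝ → ℝ := fun ρ => ∫ t : ℝ, f₀ (ρ * t + η) * ((1 : ℝ) + t ^ 2) ^ (-(3 : ℝ) / 2)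
    with hJ
  have hP : ∀ t : ℝ, (0 : ℝ) < ((1 : ℝ) + t ^ 2) ^ (-(3 : ℝ) / 2) := fun t =>
    Real.rpow_pos_of_pos (by positivity) _
  -- Step 1: eventual equality
  have heq : ∀ ρ : ℝ, 0 < ρ → Real.sqrt ρ * smearedF f₀ ρ η = J ρ / 2 := by
    intro ρ hρ
    have hsub : ∀ t : ℝ, f₀ (ρ * t + η) * (ρ ^ 2 + (η - (ρ * t + η)) ^ 2) ^ (-(3 : ℝ) / 2)
        = ρ ^ (-(3 : ℝ)) * (f₀ (ρ * t + η) * ((1 : ℝ) + t ^ 2) ^ (-(3 : ℝ) / 2)) := by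
      intro t
      have e1 : (ρ ^ 2 + (η - (ρ * t + η)) ^ 2 : ℝ) = ρ ^ 2 * (1 + t ^ 2) := by ring
      rw [e1, Real.mul_rpow (by positivity) (by positivity)]
      have e2 : ((ρ : ℝ) ^ 2) ^ (-(3 : ℝ) / 2) = ρ ^ (-(3 : ℝ)) := by
        rw [← Real.rpow_natCast ρ 2, ← Real.rpow_mul hρ.le]
        norm_num
      rw [e2]; ring
    have hcv : (∫ y : ℝ, f₀ y * (ρ ^ 2 + (η - y) ^ 2) ^ (-(3 : ℝ) / 2))
        = ρ * (ρ ^ (-(3 : ℝ)) * J ρ) := by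
      set g : ℝ → ℝ := fun y => f₀ y * (ρ ^ 2 + (η - y) ^ 2) ^ (-(3 : ℝ) / 2) with hg
      have h1 : (∫ t : ℝ, g (ρ * t + η)) = |ρ⁻¹| • ∫ y : ℝ, g (y + η) :=
        MeasureTheory.Measure.integral_comp_mul_left (fun y => g (y + η)) ρ
      have h2 : (∫ y : ℝ, g (y + η)) = ∫ y : ℝ, g y :=
        integral_add_right_eq_self g η
      have h3 : (∫ t : ℝ, g (ρ * t + η)) = ρ ^ (-(3 : ℝ)) * J ρ := by
        simp_rw [hg]
        rw [show (fun t : ℝ => f₀ (ρ * t + η) * (ρ ^ 2 + (η - (ρ * t + η)) ^ 2) ^ (-(3 : ℝ) / 2))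
            = fun t : ℝ => ρ ^ (-(3 : ℝ)) * (f₀ (ρ * t + η) * ((1 : ℝ) + t ^ 2) ^ (-(3 : ℝ) / 2))
            from funext hsub]
        rw [MeasureTheory.integral_const_mul]
      rw [h2] at h1
      rw [h3] at h1
      rw [abs_of_pos (inv_pos.mpr hρ), smul_eq_mul] at h1
      field_simp at h1 ⊢
      linarith [h1]
    rw [smearedF, hcv, Real.sqrt_eq_rpow]
    have hpow : ρ ^ ((1 : ℝ) / 2) * ρ ^ ((3 : ℝ) / 2) * ρ ^ (1 : ℝ) * ρ ^ (-(3 : ℝ))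
        = 1 := by
      rw [← Real.rpow_add hρ, ← Real.rpow_add hρ, ← Real.rpow_add hρ]
      norm_num
    rw [Real.rpow_one] at hpow
    linear_combination (J ρ / 2) * hpow
  -- Step 2: dominated convergence
  have hJlim : Tendsto J (nhdsWithin 0 (Set.Ioi 0)) (nhds (f₀ η * 2)) := by
    have key : Tendsto J (nhdsWithin 0 (Set.Ioi 0))
        (nhds (∫ t : ℝ, f₀ η * ((1 : ℝ) + t ^ 2) ^ (-(3 : ℝ) / 2))) := by
      apply tendsto_integral_filter_of_dominated_convergence
        (bound := fun t => |C| * ((1 : ℝ) + t ^ 2) ^ (-(3 : ℝ) / 2))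
      · filter_upwards with ρ
        have hcont2 : Continuous fun t : ℝ => ((1 : ℝ) + t ^ 2) ^ (-(3 : ℝ) / 2) :=
          (continuous_const.add (continuous_pow 2)).rpow_const fun a => Or.inl (ne_of_gt (by show (0 : ℝ) < 1 + a ^ 2; positivity))
        exact ((hc.comp (by continuity)).mul hcont2).aestronglyMeasurable
      · filter_upwards with ρ
        filter_upwards with t
        rw [Real.norm_eq_abs, abs_mul, abs_of_pos (hP t)]
        exact mul_le_mul_of_nonneg_right ((hC _).trans (le_abs_self C)) (hP t).le
      · exact poisson_integrable.const_mul _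
      · filter_upwards with t
        have h1 : Tendsto (fun ρ : ℝ => ρ * t + η) (nhdsWithin 0 (Set.Ioi 0)) (nhds η) := by
          have : Tendsto (fun ρ : ℝ => ρ * t + η) (nhds 0) (nhds (0 * t + η)) :=
            ((continuous_id.mul continuous_const).add continuous_const).tendsto 0
          simpa using this.mono_left nhdsWithin_le_nhds
        exact ((hc.tendsto η).comp h1).mul_const _
    rw [MeasureTheory.integral_const_mul, poisson_integral] at key
    exact key
  have := hJlim.div_const 2
  rw [show f₀ η * 2 / 2 = f₀ η by ring] at this
  refine this.congr' ?_
  filter_upwards [self_mem_nhdsWithin] with ρ (hρ : 0 < ρ)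
  exact (heq ρ hρ).symm
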